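/- Assume b_k > 0 for all k ≥ 0, and define g_0 = 0 and g_k = μ b_{k−1} / (κ c_k b_k) for k ≥ 1. Then for every k ≥ 1 one has g_k (1 − g_{k−1}) = μ / (κ² c_k²); moreover the sequence (g_k)_{k≥0} is nondecreasing and satisfies g_k ≤ 1/2 for all k. -/

import Mathlib

/-- With the sequence `(B k)` as in the appendix lemma, assume `B k > 0` for all `k`,
and define `g 0 = 0`, `g k = μ B (k−1) / (κ c k B k)` for `k ≥ 1`.  Then
`g k (1 − g (k−1)) = μ / (κ² c k²)` for all `k ≥ 1`, the sequence `g` is nondecreasing,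
and `g k ≤ 1/2` for all `k`. -/
theorem auxiliary_sequence_properties
    (q a b : ℝ) (hq0 : 0 < q) (hq1 : q < 1) (ha : 0 < a) (hb : 0 < b)
    (c : ℕ → ℝ) (hc : ∀ k : ℕ, 1 ≤ k → c k = (Real.sqrt (1 - q ^ (2 * k)))⁻¹)
    (B : ℕ → ℝ) (hB0 : B 0 = 1) (hB1 : B 1 = (a + b) * c 1)
    (hBrec : ∀ k : ℕ, 1 ≤ k →
      B (k + 1) = (a + b) * c (k + 1) * B k - (a * b) * (c (k + 1) / c k) * B (k - 1))
    (hBpos : ∀ k : ℕ, 0 < B k)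
    (g : ℕ → ℝ) (hg0 : g 0 = 0)
    (hg : ∀ k : ℕ, 1 ≤ k → g k = (a * b) * B (k - 1) / ((a + b) * c k * B k)) :
    (∀ k : ℕ, 1 ≤ k → g k * (1 - g (k - 1)) = (a * b) / ((a + b) ^ 2 * (c k) ^ 2)) ∧
    Monotone g ∧ (∀ k : ℕ, g k ≤ 1 / 2) := by
  have hκ : (0:ℝ) < a + b := by linarith
  have hμ : (0:ℝ) < a * b := mul_pos ha hb
  have hqpow : ∀ k : ℕ, 1 ≤ k → q ^ (2*k) < 1 := fun k hk =>
    pow_lt_one₀ hq0.le hq1 (by omega)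
  have hqpow0 : ∀ k : ℕ, 0 < q ^ (2*k) := fun k => pow_pos hq0 _
  have hcpos : ∀ k : ℕ, 1 ≤ k → 0 < c k := by
    intro k hk
    rw [hc k hk]
    exact inv_pos.mpr (Real.sqrt_pos.mpr (by linarith [hqpow k hk]))
  have hcsq : ∀ k : ℕ, 1 ≤ k → (c k)^2 = (1 - q ^ (2*k))⁻¹ := by
    intro k hk
    rw [hc k hk, inv_pow, Real.sq_sqrt (by linarith [hqpow k hk])]
  -- key identity
  have key : ∀ k : ℕ, 1 ≤ k → g k * (1 - g (k - 1)) = (a * b) / ((a + b) ^ 2 * (c k) ^ 2) := by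
    intro k hk
    match k, hk with
    | 1, _ =>
      have hc1 := hcpos 1 le_rfl
      rw [hg 1 le_rfl]
      simp only [Nat.sub_self, hg0, hB0, hB1]
      field_simp
      ring
    | (m+2), _ =>
      have hm1 : (1:ℕ) ≤ m+1 := by omega
      have hrec := hBrec (m+1) hm1
      have h1 := hcpos (m+1) hm1
      have h2 := hcpos (m+2) (by omega)
      have hb0 := hBpos m
      have hb1 := hBpos (m+1)
      have hb2 := hBpos (m+2)
      have hrec' : c (m+1) * B (m+2) =
          (a+b) * c (m+2) * c (m+1) * B (m+1) - (a*b) * c (m+2) * B m := by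
        have : (m+1) - 1 = m := rfl
        rw [this] at hrec
        field_simp at hrec
        linarith [hrec]
      rw [hg (m+2) (by omega), show (m+2) - 1 = m+1 from rfl, hg (m+1) hm1,
        show (m+1) - 1 = m from rfl]
      field_simp
      linear_combination (-1 : ℝ) * hrec'
  -- nonnegativity of g
  have hgnn : ∀ k : ℕ, 0 ≤ g k := by
    intro k
    rcases Nat.eq_zero_or_pos k with h | h
    · simp [h, hg0]
    · rw [hg k h]
      exact le_of_lt (div_pos (mul_pos hμ (hBpos _))
        (mul_pos (mul_pos hκ (hcpos k h)) (hBpos k)))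
  -- c k ^ 2 ≥ 1
  have hck1 : ∀ k : ℕ, 1 ≤ k → 1 ≤ (c k)^2 := by
    intro k hk
    rw [hcsq k hk]
    exact (one_le_inv₀ (by linarith [hqpow k hk])).mpr (by linarith [hqpow0 k])
  -- r k ≤ 1/4
  have hr14 : ∀ k : ℕ, 1 ≤ k → (a*b) / ((a+b)^2 * (c k)^2) ≤ 1/4 := by
    intro k hk
    have hck := hcpos k hk
    rw [div_le_div_iff₀ (by positivity) (by norm_num)]
    nlinarith [sq_nonneg (a - b), hck1 k hk, mul_pos hκ hκ]
  -- c decreasing in square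
  have hcdec : ∀ k : ℕ, 1 ≤ k → (c (k+1))^2 ≤ (c k)^2 := by
    intro k hk
    rw [hcsq k hk, hcsq (k+1) (by omega)]
    have hq' : q ^ (2*(k+1)) ≤ q ^ (2*k) :=
      pow_le_pow_of_le_one hq0.le hq1.le (by omega)
    exact inv_anti₀ (by linarith [hqpow k hk]) (by linarith)
  -- r increasing
  have hrmono : ∀ k : ℕ, 1 ≤ k →
      (a*b) / ((a+b)^2 * (c k)^2) ≤ (a*b) / ((a+b)^2 * (c (k+1))^2) := by
    intro k hk
    have h1 := hcpos k hk
    have h2 := hcpos (k+1) (Nat.le_add_left 1 k)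
    rw [div_le_div_iff₀ (by positivity) (by positivity)]
    nlinarith [mul_le_mul_of_nonneg_left (hcdec k hk) (by positivity : (0:ℝ) ≤ a*b*(a+b)^2)]
  -- joint induction
  have main : ∀ k : ℕ, g k ≤ 1/2 ∧ g k ≤ g (k+1) := by
    intro k
    induction k with
    | zero => exact ⟨by rw [hg0]; norm_num, by rw [hg0]; exact hgnn 1⟩
    | succ n ih =>
      obtain ⟨ih1, ih2⟩ := ih
      have hk1 := key (n+1) (Nat.le_add_left 1 n)
      rw [show (n+1) - 1 = n from rfl] at hk1
      have h14 := hr14 (n+1) (Nat.le_add_left 1 n)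
      have half : g (n+1) ≤ 1/2 := by
        nlinarith [hgnn (n+1), mul_nonneg (hgnn (n+1)) (by linarith : (0:ℝ) ≤ 1/2 - g n)]
      refine ⟨half, ?_⟩
      have hk2 := key (n+2) (by omega)
      rw [show (n+2) - 1 = n+1 from rfl] at hk2
      have hrm := hrmono (n+1) (Nat.le_add_left 1 n)
      nlinarith [hgnn (n+1), hgnn (n+2),
        mul_nonneg (hgnn (n+1)) (by linarith : (0:ℝ) ≤ g (n+1) - g n)]
  exact ⟨key, monotone_nat_of_le_succ (fun n => (main n).2), fun k => (main k).1⟩
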